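/- Let Ψ_x ∈ Q(n,m) be positive semidefinite on the unit circle. Then the set of coefficient tuples (P_0, P_1, …, P_m) ∈ (Matrix (Fin n) (Fin n) ℝ)^{m+1} with P_0 symmetric, such that the associated pseudo-polynomial Ψ(θ) = P_0 + ∑_{k=1}^{m} (e^{-ikθ} • P_k + e^{ikθ} • P_kᵀ) satisfies, for every θ ∈ ℝ: Ψ(θ) positive semidefinite, Ψ_x(θ) − Ψ(θ) positive semidefinite, and Ψ_x(θ) − Ψ(θ) diagonal, is a compact subset of (Matrix (Fin n) (Fin n) ℝ)^{m+1}. -/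

import Mathlib

open Matrix Complex Real
open scoped ComplexOrder

/-- The matrix pseudo-polynomial `θ ↦ Q₀ + ∑_{k=1}^m (e^{-ikθ} • Q_k + e^{ikθ} • Q_kᵀ)`
with real coefficient matrices `Q 0, …, Q m`. -/
noncomputable def psiOf (n m : ℕ) (Q : Fin (m + 1) → Matrix (Fin n) (Fin n) ℝ) :
    ℝ → Matrix (Fin n) (Fin n) ℂ := fun θ =>
  (Q 0).map (Complex.ofReal) +
    ∑ k : Fin m,
      (Complex.exp (-(Complex.I * ((k.1 : ℂ) + 1) * (θ : ℂ))) •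
          (Q k.succ).map Complex.ofReal +
        Complex.exp (Complex.I * ((k.1 : ℂ) + 1) * (θ : ℂ)) •
          ((Q k.succ)ᵀ).map Complex.ofReal)

/-- Membership in the class `Q(n,m)` of matrix pseudo-polynomials with real
coefficients and symmetric constant coefficient. -/
def memQ (n m : ℕ) (Ψ : ℝ → Matrix (Fin n) (Fin n) ℂ) : Prop :=
  ∃ Q : Fin (m + 1) → Matrix (Fin n) (Fin n) ℝ,
    (Q 0).IsSymm ∧ ∀ θ : ℝ, Ψ θ = psiOf n m Q θ

/-- The normalized trace integral `T(Ψ) = (1/2π) ∫_{-π}^{π} Re tr Ψ(θ) dθ`. -/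
noncomputable def traceInt (n : ℕ) (Ψ : ℝ → Matrix (Fin n) (Fin n) ℂ) : ℝ :=
  (1 / (2 * Real.pi)) * ∫ θ in (-Real.pi)..Real.pi, (Matrix.trace (Ψ θ)).re

/-! ### Auxiliary lemmas -/

/-- The sampled exponential `e^{2πi l t / N}`. -/
noncomputable def efn (N : ℕ) (l : ℤ) (t : ℕ) : ℂ :=
  Complex.exp (((2 * π * l * t / N : ℝ) : ℂ) * I)

lemma efn_abs (N : ℕ) (l : ℤ) (t : ℕ) : ‖efn N l t‖ = 1 :=
  Complex.norm_exp_ofReal_mul_I _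

lemma efn_mul (N : ℕ) (a b : ℤ) (t : ℕ) : efn N a t * efn N b t = efn N (a + b) t := by
  unfold efn; rw [← Complex.exp_add]; congr 1; push_cast; ring

lemma efn_zero' (N t : ℕ) : efn N 0 t = 1 := by simp [efn]

lemma sum_efn_zero (N : ℕ) : ∑ t : Fin N, efn N 0 t.1 = (N : ℂ) := by
  simp [efn]

lemma sum_efn (N : ℕ) (l : ℤ) (hl : l ≠ 0) (hl' : l.natAbs < N) :
    ∑ t : Fin N, efn N l t.1 = 0 := by
  have hN : 0 < N := lt_of_le_of_lt (Nat.zero_le _) hl'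
  have hNC : (N : ℂ) ≠ 0 := Nat.cast_ne_zero.mpr hN.ne'
  have hNR : (N : ℝ) ≠ 0 := Nat.cast_ne_zero.mpr hN.ne'
  set ω : ℂ := efn N l 1 with hω
  have hpow : ∀ t : ℕ, efn N l t = ω ^ t := by
    intro t
    rw [hω]
    unfold efn
    rw [← Complex.exp_nat_mul]
    congr 1
    push_cast
    field_simp
  have hωN : ω ^ N = 1 := by
    rw [← hpow N]
    unfold efn
    rw [show ((2 * π * l * N / N : ℝ) : ℂ) * I = (l : ℂ) * (2 * π * I) by
      push_cast; field_simp]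
    exact Complex.exp_int_mul_two_pi_mul_I l
  have hω1 : ω ≠ 1 := by
    intro h
    rw [hω] at h
    unfold efn at h
    rw [Complex.exp_eq_one_iff] at h
    obtain ⟨k, hk⟩ := h
    have hk' : (2 * π * l * 1 / N : ℝ) = k * (2 * π) := by
      have := hk
      rw [show ((k : ℂ) * (2 * ↑π * I)) = (((k : ℝ) * (2 * π) : ℝ) : ℂ) * I by
        push_cast; ring] at this
      have := mul_right_cancel₀ Complex.I_ne_zero this
      exact_mod_cast this
    have hpi : (π : ℝ) ≠ 0 := Real.pi_ne_zero
    have : (l : ℝ) = k * N := by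
      field_simp at hk'
      nlinarith [hk', Real.pi_pos]
    have hlk : l = k * N := by exact_mod_cast this
    rcases eq_or_ne k 0 with hk0 | hk0
    · exact hl (by simp [hlk, hk0])
    · have : N ≤ l.natAbs := by
        rw [hlk, Int.natAbs_mul]
        calc N = 1 * N := (one_mul N).symm
        _ ≤ k.natAbs * (N:ℤ).natAbs := by
            apply Nat.mul_le_mul
            · exact Nat.one_le_iff_ne_zero.mpr (Int.natAbs_ne_zero.mpr hk0)
            · simp
      omega
  calc ∑ t : Fin N, efn N l t.1 = ∑ t ∈ Finset.range N, ω ^ t := by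
        rw [Fin.sum_univ_eq_sum_range (fun t => efn N l t)]
        exact Finset.sum_congr rfl fun t _ => hpow t
    _ = (ω ^ N - 1) / (ω - 1) := geom_sum_eq hω1 N
    _ = 0 := by rw [hωN]; simp

lemma psiOf_apply (n m : ℕ) (P : Fin (m + 1) → Matrix (Fin n) (Fin n) ℝ) (θ : ℝ)
    (i j : Fin n) :
    psiOf n m P θ i j = (P 0 i j : ℂ) +
      ∑ k : Fin m, (Complex.exp (-(Complex.I * ((k.1 : ℂ) + 1) * (θ : ℂ))) * (P k.succ i j : ℂ) +
        Complex.exp (Complex.I * ((k.1 : ℂ) + 1) * (θ : ℂ)) * (P k.succ j i : ℂ)) := by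
  rw [psiOf]
  rw [Matrix.add_apply, Matrix.sum_apply]
  simp [Matrix.add_apply, Matrix.smul_apply, Matrix.map_apply, Matrix.transpose_apply,
    smul_eq_mul]

lemma psiOf_apply_sample (n m N : ℕ) (P : Fin (m + 1) → Matrix (Fin n) (Fin n) ℝ)
    (t : ℕ) (i j : Fin n) :
    psiOf n m P (2 * π * t / N) i j = (P 0 i j : ℂ) +
      ∑ k : Fin m, (efn N (-(k.1 + 1)) t * (P k.succ i j : ℂ) +
        efn N (k.1 + 1) t * (P k.succ j i : ℂ)) := by
  rw [psiOf_apply]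
  congr 1
  refine Finset.sum_congr rfl fun k _ => ?_
  congr 2
  · unfold efn; congr 1; push_cast; ring
  · unfold efn; congr 1; push_cast; ring

lemma recov_zero (n m : ℕ) (P : Fin (m + 1) → Matrix (Fin n) (Fin n) ℝ) (i j : Fin n) :
    ∑ t : Fin (2 * m + 1), psiOf n m P (2 * π * t.1 / (2 * m + 1)) i j
      = ((2 * m + 1 : ℕ) : ℂ) * (P 0 i j : ℂ) := by
  have hcast : (2 * (m:ℝ) + 1) = ((2*m+1 : ℕ) : ℝ) := by push_cast; ring
  simp only [hcast]
  have key : ∀ t : Fin (2*m+1), psiOf n m P (2 * π * t.1 / ((2*m+1 : ℕ):ℝ)) i j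
      = (P 0 i j : ℂ) +
        ∑ k : Fin m, (efn (2*m+1) (-(k.1 + 1)) t.1 * (P k.succ i j : ℂ) +
          efn (2*m+1) (k.1 + 1) t.1 * (P k.succ j i : ℂ)) := fun t =>
    psiOf_apply_sample n m (2*m+1) P t.1 i j
  simp_rw [key]
  rw [Finset.sum_add_distrib, Finset.sum_const, Finset.sum_comm]
  have h2 : ∀ k : Fin m, ∑ t : Fin (2*m+1),
      (efn (2*m+1) (-(k.1 + 1)) t.1 * (P k.succ i j : ℂ)
        + efn (2*m+1) (k.1 + 1) t.1 * (P k.succ j i : ℂ)) = 0 := by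
    intro k
    rw [Finset.sum_add_distrib, ← Finset.sum_mul, ← Finset.sum_mul,
      sum_efn _ _ (by omega) (by omega), sum_efn _ _ (by omega) (by omega)]
    ring
  rw [Finset.sum_congr rfl fun k _ => h2 k]
  simp [mul_comm]

lemma recov_succ (n m : ℕ) (P : Fin (m + 1) → Matrix (Fin n) (Fin n) ℝ) (i j : Fin n)
    (k0 : Fin m) :
    ∑ t : Fin (2 * m + 1), efn (2 * m + 1) (k0.1 + 1) t.1 *
        psiOf n m P (2 * π * t.1 / (2 * m + 1)) i j
      = ((2 * m + 1 : ℕ) : ℂ) * (P k0.succ i j : ℂ) := by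
  have hcast : (2 * (m:ℝ) + 1) = ((2*m+1 : ℕ) : ℝ) := by push_cast; ring
  simp only [hcast]
  have key : ∀ t : Fin (2*m+1), efn (2*m+1) (k0.1 + 1) t.1 *
        psiOf n m P (2 * π * t.1 / ((2*m+1 : ℕ):ℝ)) i j
      = efn (2*m+1) (k0.1 + 1) t.1 * (P 0 i j : ℂ) +
        ∑ k : Fin m, (efn (2*m+1) ((k0.1 + 1) + -(k.1 + 1)) t.1 * (P k.succ i j : ℂ) +
          efn (2*m+1) ((k0.1 + 1) + (k.1 + 1)) t.1 * (P k.succ j i : ℂ)) := by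
    intro t
    rw [psiOf_apply_sample n m (2*m+1), mul_add, Finset.mul_sum]
    congr 1
    refine Finset.sum_congr rfl fun k _ => ?_
    rw [mul_add, ← mul_assoc, ← mul_assoc, efn_mul, efn_mul]
  simp_rw [key]
  rw [Finset.sum_add_distrib, ← Finset.sum_mul,
    sum_efn _ _ (by omega) (by omega), Finset.sum_comm]
  rw [Finset.sum_eq_single k0 (fun k _ hk => ?_) (by simp)]
  · rw [Finset.sum_add_distrib, ← Finset.sum_mul, ← Finset.sum_mul]
    rw [show ((k0.1:ℤ) + 1) + -((k0.1:ℤ) + 1) = 0 by ring, sum_efn_zero,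
      sum_efn _ _ (by omega) (by omega)]
    ring
  · have hkk : (k.1 : ℤ) ≠ k0.1 := by
      intro h; apply hk; exact Fin.ext (by exact_mod_cast h)
    rw [Finset.sum_add_distrib, ← Finset.sum_mul, ← Finset.sum_mul,
      sum_efn _ _ (by omega) (by omega), sum_efn _ _ (by omega) (by omega)]
    ring

lemma psd_diag (n : ℕ) {A : Matrix (Fin n) (Fin n) ℂ} (hA : A.PosSemidef) (i : Fin n) :
    0 ≤ A i i := by
  have := hA.dotProduct_mulVec_nonneg (Pi.single i 1)
  simpa [Matrix.mulVec_single, dotProduct, Pi.single_apply, Finset.sum_ite_eq,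
    apply_ite] using this

lemma psd_diag_re_nonneg (n : ℕ) {A : Matrix (Fin n) (Fin n) ℂ} (hA : A.PosSemidef) (i : Fin n) :
    0 ≤ (A i i).re := by
  have := psd_diag n hA i
  rw [Complex.le_def] at this
  simpa using this.1

lemma psd_entry_bound (n : ℕ) {A : Matrix (Fin n) (Fin n) ℂ} (hA : A.PosSemidef) (i j : Fin n) :
    ‖A i j‖ ≤ ((A i i).re + (A j j).re) / 2 := by
  rcases eq_or_ne i j with rfl | hij
  · have h0 := psd_diag n hA i
    rw [Complex.le_def] at h0
    rw [Complex.norm_def, Complex.normSq_apply, ← h0.2]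
    simp only [Complex.zero_im]
    rw [show (A i i).re * (A i i).re + 0 * 0 = (A i i).re ^ 2 by ring, Real.sqrt_sq h0.1]
    linarith [h0.1]
  rcases eq_or_ne (A i j) 0 with h0 | h0
  · rw [h0]
    simp only [norm_zero]
    have := psd_diag_re_nonneg n hA i
    have := psd_diag_re_nonneg n hA j
    linarith
  set r : ℝ := ‖A i j‖ with hr
  have hrpos : 0 < r := by rw [hr]; exact norm_pos_iff.mpr h0
  have hr0C : (r : ℂ) ≠ 0 := Complex.ofReal_ne_zero.mpr hrpos.ne'
  set c : ℂ := -(starRingEnd ℂ (A i j)) / r with hc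
  set x : Fin n → ℂ := Pi.single i 1 + Pi.single j c with hx
  have hq := hA.dotProduct_mulVec_nonneg x
  have hherm := Matrix.IsHermitian.ext_iff.mp hA.1 i j
  have hji : A j i = starRingEnd ℂ (A i j) := by
    have := congrArg star hherm
    simpa [Complex.star_def] using this.symm.symm
  have hsx : star x = Pi.single i 1 + Pi.single j (starRingEnd ℂ c) := by
    funext a
    simp only [hx, Pi.star_apply, Pi.add_apply, Pi.single_apply]
    split_ifs <;> simp [Complex.star_def]
  have hval : dotProduct (star x) (A *ᵥ x)
      = A i i + A i j * c + starRingEnd ℂ c * (A j i + A j j * c) := by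
    rw [hsx, hx]
    rw [Matrix.mulVec_add, Matrix.mulVec_single, Matrix.mulVec_single]
    rw [add_dotProduct, single_dotProduct, single_dotProduct]
    simp only [Pi.add_apply, Pi.smul_apply, Matrix.col_apply, op_smul_eq_mul]
    ring
  rw [hval] at hq
  have hnorm : A i j * starRingEnd ℂ (A i j) = ((r ^ 2 : ℝ) : ℂ) := by
    rw [Complex.mul_conj]
    norm_cast
    rw [hr, Complex.sq_norm]
  have hcc : starRingEnd ℂ c = -(A i j) / r := by
    rw [hc]
    simp [map_div₀]
  have hAc : A i j * c = -(r : ℂ) := by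
    have h1 : A i j * c = -(A i j * starRingEnd ℂ (A i j)) / r := by rw [hc]; ring
    rw [h1, hnorm]
    push_cast
    field_simp
  have hcAji : starRingEnd ℂ c * A j i = -(r : ℂ) := by
    have h1 : starRingEnd ℂ c * A j i = -(A i j * starRingEnd ℂ (A i j)) / r := by
      rw [hcc, hji]; ring
    rw [h1, hnorm]
    push_cast
    field_simp
  have hccc : starRingEnd ℂ c * (A j j * c) = A j j := by
    have h1 : starRingEnd ℂ c * (A j j * c)
        = A j j * ((A i j * starRingEnd ℂ (A i j)) / ((r : ℂ) * r)) := by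
      rw [hcc, hc]; ring
    rw [h1, hnorm]
    rw [show ((r^2 : ℝ) : ℂ) / ((r:ℂ) * r) = 1 by push_cast; field_simp]
    ring
  have hq2 : (0:ℂ) ≤ A i i + A j j - 2 * r := by
    calc (0:ℂ) ≤ A i i + A i j * c + starRingEnd ℂ c * (A j i + A j j * c) := hq
    _ = A i i + A j j - 2 * r := by
        rw [hAc, mul_add, hcAji, hccc]; push_cast; ring
  rw [Complex.le_def] at hq2
  have h3 := hq2.1
  simp only [Complex.add_re, Complex.sub_re, Complex.zero_re, Complex.mul_re,
    Complex.ofReal_re, Complex.ofReal_im] at h3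
  norm_num at h3
  linarith

lemma isClosed_nonneg_complex : IsClosed {z : ℂ | 0 ≤ z} := by
  have : {z : ℂ | 0 ≤ z} = Complex.re ⁻¹' Set.Ici 0 ∩ Complex.im ⁻¹' {0} := by
    ext z; simp [Complex.le_def, eq_comm]
  rw [this]
  exact (isClosed_Ici.preimage Complex.continuous_re).inter
    (isClosed_singleton.preimage Complex.continuous_im)

lemma isClosed_posSemidef (n : ℕ) : IsClosed {A : Matrix (Fin n) (Fin n) ℂ | A.PosSemidef} := by
  have : {A : Matrix (Fin n) (Fin n) ℂ | A.PosSemidef}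
      = (⋂ i, ⋂ j, {A : Matrix (Fin n) (Fin n) ℂ | star (A j i) = A i j}) ∩
        ⋂ x : Fin n → ℂ, {A | 0 ≤ dotProduct (star x) (A *ᵥ x)} := by
    ext A
    simp only [Set.mem_setOf_eq, Set.mem_inter_iff, Set.mem_iInter]
    constructor
    · exact fun h => ⟨fun i j => Matrix.IsHermitian.ext_iff.mp h.1 i j, h.dotProduct_mulVec_nonneg⟩
    · exact fun h => Matrix.PosSemidef.of_dotProduct_mulVec_nonneg (Matrix.IsHermitian.ext_iff.mpr h.1) h.2
  rw [this]
  refine IsClosed.inter (isClosed_iInter fun i => isClosed_iInter fun j => ?_)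
    (isClosed_iInter fun x => ?_)
  · exact isClosed_eq (by fun_prop) (by fun_prop)
  · refine IsClosed.preimage ?_ isClosed_nonneg_complex
    have : (fun A : Matrix (Fin n) (Fin n) ℂ => dotProduct (star x) (A *ᵥ x))
        = fun A => ∑ a, star (x a) * ∑ b, A a b * x b := by
      funext A; rfl
    rw [this]
    fun_prop

lemma isClosed_isDiag (n : ℕ) : IsClosed {A : Matrix (Fin n) (Fin n) ℂ | A.IsDiag} := by
  have : {A : Matrix (Fin n) (Fin n) ℂ | A.IsDiag}
      = ⋂ i, ⋂ j, ⋂ (_ : i ≠ j), {A : Matrix (Fin n) (Fin n) ℂ | A i j = 0} := by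
    ext A
    simp only [Set.mem_setOf_eq, Set.mem_iInter]
    exact ⟨fun h i j hij => h hij, fun h i j hij => h i j hij⟩
  rw [this]
  exact isClosed_iInter fun i => isClosed_iInter fun j => isClosed_iInter fun _ =>
    isClosed_eq (by fun_prop) continuous_const

lemma cont_psiOf (n m : ℕ) (θ : ℝ) :
    Continuous fun P : Fin (m + 1) → Matrix (Fin n) (Fin n) ℝ => psiOf n m P θ := by
  unfold psiOf
  refine Continuous.add (((continuous_apply (0 : Fin (m+1))).matrix_map
    Complex.continuous_ofReal)) (continuous_finset_sum _ fun k _ => Continuous.add ?_ ?_)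
  · exact ((_root_.continuous_apply (A := fun _ : Fin (m+1) => Matrix (Fin n) (Fin n) ℝ) k.succ).matrix_map Complex.continuous_ofReal).const_smul (Complex.exp (-(Complex.I * ((k.1 : ℂ) + 1) * (θ : ℂ))))
  · exact ((_root_.continuous_apply (A := fun _ : Fin (m+1) => Matrix (Fin n) (Fin n) ℝ) k.succ).matrix_transpose.matrix_map
      Complex.continuous_ofReal).const_smul (Complex.exp (Complex.I * ((k.1 : ℂ) + 1) * (θ : ℂ)))

lemma abs_exp_one {z : ℂ} (h : z.re = 0) : ‖Complex.exp z‖ = 1 := by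
  rw [Complex.norm_exp, h, Real.exp_zero]

lemma psiOf_diag_re_le (n m : ℕ) (Q : Fin (m + 1) → Matrix (Fin n) (Fin n) ℝ) (θ : ℝ)
    (i : Fin n) :
    ((psiOf n m Q θ) i i).re ≤ |Q 0 i i| + ∑ k : Fin m, 2 * |Q k.succ i i| := by
  have hre1 : ∀ k : Fin m, (Complex.I * ((k.1 : ℂ) + 1) * (θ : ℂ)).re = 0 := by
    intro k
    simp [Complex.mul_re, Complex.mul_im]
  rw [psiOf_apply]
  refine le_trans (Complex.re_le_norm _) ?_
  refine le_trans (norm_add_le _ _) ?_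
  gcongr
  · rw [Complex.norm_real, Real.norm_eq_abs]
  · refine le_trans (norm_sum_le _ _) ?_
    refine Finset.sum_le_sum fun k _ => ?_
    refine le_trans (norm_add_le _ _) ?_
    rw [norm_mul, norm_mul, abs_exp_one (by simp [hre1 k]), abs_exp_one (hre1 k),
      Complex.norm_real, Real.norm_eq_abs]
    ring_nf
    linarith [abs_nonneg (Q k.succ i i)]

/-- The set of coefficient tuples whose associated pseudo-polynomial
`Ψ` satisfies `Ψ(θ) ⪰ 0`, `Ψ_x(θ) − Ψ(θ) ⪰ 0` and `Ψ_x(θ) − Ψ(θ)` diagonal for all `θ`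
is a compact subset of `(Matrix (Fin n) (Fin n) ℝ)^{m+1}`. -/
theorem isCompact_feasible_coefficients
    (n m : ℕ) (hn : 0 < n) (hm : 0 < m)
    (Ψx : ℝ → Matrix (Fin n) (Fin n) ℂ)
    (hΨx : memQ n m Ψx) (hpsd : ∀ θ : ℝ, (Ψx θ).PosSemidef) :
    IsCompact {P : Fin (m + 1) → Matrix (Fin n) (Fin n) ℝ | (P 0).IsSymm ∧
      ∀ θ : ℝ, (psiOf n m P θ).PosSemidef ∧ (Ψx θ - psiOf n m P θ).PosSemidef ∧
        (Ψx θ - psiOf n m P θ).IsDiag} := by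
  obtain ⟨Q, hQsym, hQ⟩ := hΨx
  set S := {P : Fin (m + 1) → Matrix (Fin n) (Fin n) ℝ | (P 0).IsSymm ∧
      ∀ θ : ℝ, (psiOf n m P θ).PosSemidef ∧ (Ψx θ - psiOf n m P θ).PosSemidef ∧
        (Ψx θ - psiOf n m P θ).IsDiag} with hS
  -- the bound on diagonal entries of Ψx
  have hDnonneg : ∀ a : Fin n, (0:ℝ) ≤ |Q 0 a a| + ∑ k : Fin m, 2 * |Q k.succ a a| := by
    intro a
    have : (0:ℝ) ≤ ∑ k : Fin m, 2 * |Q k.succ a a| :=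
      Finset.sum_nonneg fun k _ => by positivity
    positivity
  obtain ⟨C, hC0, hxdiag⟩ : ∃ C : ℝ, 0 ≤ C ∧ ∀ (θ : ℝ) (i : Fin n), ((Ψx θ) i i).re ≤ C :=
    ⟨∑ a, (|Q 0 a a| + ∑ k : Fin m, 2 * |Q k.succ a a|),
      Finset.sum_nonneg fun a _ => hDnonneg a, fun θ i => by
        rw [hQ θ]
        exact le_trans (psiOf_diag_re_le n m Q θ i)
          (Finset.single_le_sum (fun a _ => hDnonneg a) (Finset.mem_univ i))⟩
  -- entries of feasible pseudo-polynomials are bounded by C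
  have hbound : ∀ P ∈ S, ∀ (θ : ℝ) (i j : Fin n),
      ‖psiOf n m P θ i j‖ ≤ C := by
    intro P hP θ i j
    obtain ⟨hsym, hcond⟩ := hP
    obtain ⟨hA, hdiff, _⟩ := hcond θ
    have hdiag_le : ∀ a : Fin n, ((psiOf n m P θ) a a).re ≤ C := by
      intro a
      have h1 := psd_diag_re_nonneg n hdiff a
      rw [Matrix.sub_apply, Complex.sub_re] at h1
      have := hxdiag θ a
      linarith
    have h2 := psd_entry_bound n hA i j
    have h3 := hdiag_le i
    have h4 := hdiag_le j
    linarith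
  -- coefficients are bounded by C
  have hcoef : ∀ P ∈ S, ∀ (k : Fin (m + 1)) (i j : Fin n), |P k i j| ≤ C := by
    intro P hP k i j
    have hNpos : (0:ℝ) < (2 * m + 1 : ℕ) := by positivity
    have key : ((2 * m + 1 : ℕ) : ℝ) * |P k i j| ≤ ((2 * m + 1 : ℕ) : ℝ) * C := by
      induction k using Fin.cases with
      | zero =>
        have hr := recov_zero n m P i j
        have : ((2 * m + 1 : ℕ) : ℝ) * |P 0 i j|
            = ‖∑ t : Fin (2 * m + 1),
                psiOf n m P (2 * π * t.1 / (2 * m + 1)) i j‖ := by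
          rw [hr, norm_mul, Complex.norm_natCast, Complex.norm_real, Real.norm_eq_abs]
        rw [this]
        refine le_trans (norm_sum_le _ _) ?_
        rw [show ((2 * m + 1 : ℕ) : ℝ) * C = ∑ _t : Fin (2 * m + 1), C by
          rw [Finset.sum_const]; simp [mul_comm]]
        exact Finset.sum_le_sum fun t _ => hbound P hP _ i j
      | succ k0 =>
        have hr := recov_succ n m P i j k0
        have : ((2 * m + 1 : ℕ) : ℝ) * |P k0.succ i j|
            = ‖∑ t : Fin (2 * m + 1), efn (2 * m + 1) (k0.1 + 1) t.1 *
                psiOf n m P (2 * π * t.1 / (2 * m + 1)) i j‖ := by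
          rw [hr, norm_mul, Complex.norm_natCast, Complex.norm_real, Real.norm_eq_abs]
        rw [this]
        refine le_trans (norm_sum_le _ _) ?_
        rw [show ((2 * m + 1 : ℕ) : ℝ) * C = ∑ _t : Fin (2 * m + 1), C by
          rw [Finset.sum_const]; simp [mul_comm]]
        refine Finset.sum_le_sum fun t _ => ?_
        rw [norm_mul, efn_abs, one_mul]
        exact hbound P hP _ i j
    exact le_of_mul_le_mul_left key hNpos
  -- the compact box
  have hbox : IsCompact {P : Fin (m+1) → Matrix (Fin n) (Fin n) ℝ |
      ∀ k i j, P k i j ∈ Set.Icc (-C) C} := by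
    have : {P : Fin (m+1) → Matrix (Fin n) (Fin n) ℝ | ∀ k i j, P k i j ∈ Set.Icc (-C) C}
        = Set.univ.pi (fun _ : Fin (m+1) => (Set.univ.pi (fun _ : Fin n =>
            Set.univ.pi fun _ : Fin n => Set.Icc (-C) C) : Set (Matrix (Fin n) (Fin n) ℝ))) := by
      ext P
      simp only [Set.mem_setOf_eq, Set.mem_pi, Set.mem_univ, forall_true_left, Set.mem_Icc,
        forall_const]
      show _ ↔ ∀ k ∈ Set.univ, ∀ i ∈ Set.univ, ∀ j ∈ Set.univ, P k i j ∈ Set.Icc (-C) C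
      simp
    rw [this]
    exact isCompact_univ_pi fun _ => isCompact_univ_pi fun _ => isCompact_univ_pi fun _ =>
      isCompact_Icc
  -- S is closed
  have hclosed : IsClosed S := by
    have hSeq : S = {P : Fin (m + 1) → Matrix (Fin n) (Fin n) ℝ | (P 0).IsSymm} ∩
        ⋂ θ : ℝ, ((fun P => psiOf n m P θ) ⁻¹' {A | A.PosSemidef} ∩
          ((fun P => Ψx θ - psiOf n m P θ) ⁻¹' {A | A.PosSemidef}) ∩
          ((fun P => Ψx θ - psiOf n m P θ) ⁻¹' {A | A.IsDiag})) := by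
      rw [hS]
      ext P
      simp only [Set.mem_setOf_eq, Set.mem_inter_iff, Set.mem_iInter, Set.mem_preimage]
      constructor
      · rintro ⟨h1, h2⟩
        exact ⟨h1, fun θ => ⟨⟨(h2 θ).1, (h2 θ).2.1⟩, (h2 θ).2.2⟩⟩
      · rintro ⟨h1, h2⟩
        exact ⟨h1, fun θ => ⟨(h2 θ).1.1, (h2 θ).1.2, (h2 θ).2⟩⟩
    rw [hSeq]
    refine IsClosed.inter ?_ (isClosed_iInter fun θ => ?_)
    · have : {P : Fin (m + 1) → Matrix (Fin n) (Fin n) ℝ | (P 0).IsSymm}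
          = ⋂ i, ⋂ j, {P : Fin (m + 1) → Matrix (Fin n) (Fin n) ℝ | P 0 j i = P 0 i j} := by
        ext P
        simp only [Set.mem_setOf_eq, Set.mem_iInter, Matrix.IsSymm.ext_iff]
      rw [this]
      exact isClosed_iInter fun i => isClosed_iInter fun j =>
        isClosed_eq (((continuous_apply (0 : Fin (m+1))).matrix_elem j i))
          (((continuous_apply (0 : Fin (m+1))).matrix_elem i j))
    · have hc1 := cont_psiOf n m θ
      have hc2 : Continuous fun P : Fin (m + 1) → Matrix (Fin n) (Fin n) ℝ =>
          Ψx θ - psiOf n m P θ := continuous_const.sub hc1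
      exact IsClosed.inter (IsClosed.inter ((isClosed_posSemidef n).preimage hc1)
        ((isClosed_posSemidef n).preimage hc2)) ((isClosed_isDiag n).preimage hc2)
  -- conclude
  refine hbox.of_isClosed_subset hclosed ?_
  intro P hP k i j
  rw [Set.mem_Icc, ← abs_le]
  exact hcoef P hP k i j
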